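/- arXiv:1211.5386 — 4 statements merged into one kernel-verified Lean document; each statement's English description precedes it below -/
import Mathlib

section
/- Let k be a field, let A ∈ M_{m,n}(ℤ) be an integer matrix with columns α_1,…,α_n ∈ ℤ^m, and let φ_A : k[x_1,…,x_n] → k[t_1^{±1},…,t_m^{±1}] be the k-algebra homomorphism into the Laurent polynomial ring determined by φ_A(x_i) = t^{α_i}. Then: (a) for every u ∈ ℕ^n one has φ_A(x^u) = t^{A·u}; and (b) the kernel of φ_A equals the ideal I_A generated by all binomials x^u − x^v with u, v ∈ ℕ^n satisfying A·u = A·v. -/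
open MvPolynomial

/-- The `k`-algebra homomorphism `φ_A : k[x_1,…,x_n] → k[t_1^{±1},…,t_m^{±1}]`
(the Laurent polynomial ring, realized as the group algebra `k[ℤ^m]`)
sending `x_i` to the Laurent monomial `t^{α_i}` with exponent vector the `i`-th column of `A`. -/
noncomputable def phiA (k : Type) [Field k] {m n : ℕ} (A : Matrix (Fin m) (Fin n) ℤ) :
    MvPolynomial (Fin n) k →ₐ[k] AddMonoidAlgebra k (Fin m → ℤ) :=
  MvPolynomial.aeval fun i => AddMonoidAlgebra.single (fun j => A j i) 1

lemma partA (k : Type) [Field k] {m n : ℕ} (A : Matrix (Fin m) (Fin n) ℤ) (u : Fin n →₀ ℕ) :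
    phiA k A (monomial u 1) =
      AddMonoidAlgebra.single (A.mulVec fun i => (u i : ℤ)) 1 := by
  rw [phiA, aeval_monomial, map_one, one_mul]
  rw [Finsupp.prod]
  simp only [AddMonoidAlgebra.single_pow, one_pow]
  rw [AddMonoidAlgebra.prod_single]
  congr 1
  · funext j
    rw [Finset.sum_apply]
    rw [Matrix.mulVec, dotProduct]
    rw [Finset.sum_subset (Finset.subset_univ u.support)]
    · apply Finset.sum_congr rfl
      intro i _
      simp [mul_comm]
    · intro i _ hi
      simp [Finsupp.notMem_support_iff.mp hi]
  · simp

lemma partA' (k : Type) [Field k] {m n : ℕ} (A : Matrix (Fin m) (Fin n) ℤ)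
    (u : Fin n →₀ ℕ) (c : k) :
    phiA k A (monomial u c) =
      AddMonoidAlgebra.single (A.mulVec fun i => (u i : ℤ)) c := by
  have : monomial u c = C c * monomial u 1 := by simp [C_mul_monomial]
  rw [this, map_mul, partA]
  rw [show (phiA k A) (C c) = AddMonoidAlgebra.single (0 : Fin m → ℤ) c by
    simp [phiA, algHom_C]]
  rw [AddMonoidAlgebra.single_mul_single, zero_add, mul_one]

lemma key (k : Type) [Field k] {m n : ℕ} (A : Matrix (Fin m) (Fin n) ℤ) :
    ∀ (N : ℕ) (f : MvPolynomial (Fin n) k), f.support.card ≤ N → phiA k A f = 0 →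
      f ∈ Ideal.span {f : MvPolynomial (Fin n) k |
        ∃ u v : Fin n →₀ ℕ,
          (A.mulVec fun i => (u i : ℤ)) = (A.mulVec fun i => (v i : ℤ)) ∧
          f = monomial u 1 - monomial v 1} := by
  intro N
  induction N with
  | zero =>
    intro f hcard _
    have : f = 0 := by
      have := Finset.card_eq_zero.mp (Nat.le_zero.mp hcard)
      exact support_eq_empty.mp this
    simp [this]
  | succ N ih =>
    intro f hcard hker
    by_cases hf0 : f = 0
    · simp [hf0]
    set α : (Fin n →₀ ℕ) → (Fin m → ℤ) := fun w => A.mulVec fun i => (w i : ℤ) with hα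
    obtain ⟨u, hu⟩ := support_nonempty.mpr hf0
    have hrepr : phiA k A f = ∑ w ∈ f.support, AddMonoidAlgebra.single (α w) (coeff w f) := by
      conv_lhs => rw [← support_sum_monomial_coeff f]
      rw [map_sum]
      exact Finset.sum_congr rfl fun w _ => partA' k A w (coeff w f)
    have hsum : ∑ w ∈ f.support, (if α w = α u then coeff w f else 0) = 0 := by
      have h1 := congrArg (fun g : AddMonoidAlgebra k (Fin m → ℤ) => g.coeff (α u)) hker
      rw [hrepr] at h1
      have h2 : (∑ w ∈ f.support,
          (AddMonoidAlgebra.single (α w) (coeff w f) : AddMonoidAlgebra k (Fin m → ℤ))).coeff (α u)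
          = ∑ w ∈ f.support, (AddMonoidAlgebra.single (α w) (coeff w f) :
              AddMonoidAlgebra k (Fin m → ℤ)).coeff (α u) := by
        rw [AddMonoidAlgebra.coeff_sum, Finsupp.finset_sum_apply]
      simp only [h2] at h1
      simpa [AddMonoidAlgebra.coeff_single, Finsupp.single_apply] using h1
    have hexv : ∃ v ∈ f.support, v ≠ u ∧ α v = α u := by
      by_contra hcon
      push_neg at hcon
      rw [Finset.sum_eq_single u] at hsum
      · simp at hsum
        exact (mem_support_iff.mp hu) hsum
      · intro w hw hwu
        simp [hcon w hw hwu]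
      · intro h; exact absurd hu h
    obtain ⟨v, hv, hvu, hαv⟩ := hexv
    set c := coeff u f with hc
    set b : MvPolynomial (Fin n) k := monomial u 1 - monomial v 1 with hb
    have hbS : b ∈ {f : MvPolynomial (Fin n) k |
        ∃ u v : Fin n →₀ ℕ,
          (A.mulVec fun i => (u i : ℤ)) = (A.mulVec fun i => (v i : ℤ)) ∧
          f = monomial u 1 - monomial v 1} := ⟨u, v, hαv.symm, rfl⟩
    have hφb : phiA k A b = 0 := by
      rw [hb, map_sub, partA, partA]
      rw [show (A.mulVec fun i => ((v : Fin n →₀ ℕ) i : ℤ)) = _ from hαv]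
      exact sub_self _
    set g : MvPolynomial (Fin n) k := f - C c * b with hg
    have hφg : phiA k A g = 0 := by
      rw [hg, map_sub, map_mul, hφb, mul_zero, sub_zero, hker]
    have hsupp : g.support ⊆ f.support.erase u := by
      intro w hw
      rw [mem_support_iff] at hw
      have hwu : w ≠ u := by
        rintro rfl
        apply hw
        simp [hg, hb, coeff_sub, coeff_C_mul, coeff_monomial, hvu, hc]
      rw [Finset.mem_erase]
      refine ⟨hwu, mem_support_iff.mpr fun hwf => hw ?_⟩
      by_cases hwv : w = v
      · exact absurd (hwv ▸ hwf) (mem_support_iff.mp hv)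
      · have huw : u ≠ w := Ne.symm hwu
        have hvw : v ≠ w := fun h => hwv h.symm
        simp [hg, hb, coeff_sub, coeff_C_mul, coeff_monomial, hwf, huw, hvw]
    have hcardg : g.support.card ≤ N := by
      calc g.support.card ≤ (f.support.erase u).card := Finset.card_le_card hsupp
        _ = f.support.card - 1 := Finset.card_erase_of_mem hu
        _ ≤ N := by omega
    have hgspan := ih g hcardg hφg
    have : f = g + C c * b := by rw [hg]; ring
    rw [this]
    exact Ideal.add_mem _ hgspan (Ideal.mul_mem_left _ _ (Ideal.subset_span hbS))

theorem stmt_0 (k : Type) [Field k] (m n : ℕ) (A : Matrix (Fin m) (Fin n) ℤ) :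
    (∀ u : Fin n →₀ ℕ,
        phiA k A (monomial u 1) =
          AddMonoidAlgebra.single (A.mulVec fun i => (u i : ℤ)) 1) ∧
    RingHom.ker (phiA k A) =
      Ideal.span {f : MvPolynomial (Fin n) k |
        ∃ u v : Fin n →₀ ℕ,
          (A.mulVec fun i => (u i : ℤ)) = (A.mulVec fun i => (v i : ℤ)) ∧
          f = monomial u 1 - monomial v 1} := by
  refine ⟨partA k A, le_antisymm ?_ ?_⟩
  · intro f hf
    exact key k A f.support.card f le_rfl (RingHom.mem_ker.mp hf)
  · rw [Ideal.span_le]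
    rintro f ⟨u, v, huv, rfl⟩
    rw [SetLike.mem_coe, RingHom.mem_ker]
    rw [map_sub, partA, partA, huv, sub_self]
end

section
/- Let k be a field, let A ∈ M_{m,n}(ℤ) be an integer matrix with columns α_1,…,α_n ∈ ℤ^m, and let φ_A : k[x_1,…,x_n] → k[t_1^{±1},…,t_m^{±1}] be the k-algebra homomorphism determined by φ_A(x_i) = t^{α_i}. Then ker φ_A = ( x^{u_+} − x^{u_−} : u ∈ ℤ^n with A·u = 0 ), i.e. ker φ_A is the ideal generated by the binomials x^{u_+} − x^{u_−} as u ranges over the integer kernel Ker_ℤ A := { u ∈ ℤ^n : A·u = 0 }. -/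
open MvPolynomial

/-- The positive part `u₊ ∈ ℕ^n` of an integer vector `u ∈ ℤ^n`, as a finitely
supported function (exponent vector of a monomial). -/
noncomputable def posPart {n : ℕ} (u : Fin n → ℤ) : Fin n →₀ ℕ :=
  Finsupp.equivFunOnFinite.symm fun i => (u i).toNat

lemma posPart_apply {n : ℕ} (u : Fin n → ℤ) (i : Fin n) : _root_.posPart u i = (u i).toNat := by
  simp [_root_.posPart]

/-- The linear map on exponent vectors induced by `A`. -/
def gA {m n : ℕ} (A : Matrix (Fin m) (Fin n) ℤ) (d : Fin n →₀ ℕ) : Fin m → ℤ :=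
  fun j => ∑ i, (d i : ℤ) * A j i

lemma gA_support {m n : ℕ} (A : Matrix (Fin m) (Fin n) ℤ) (d : Fin n →₀ ℕ) :
    gA A d = fun j => ∑ i ∈ d.support, (d i : ℤ) * A j i := by
  funext j
  exact (Finset.sum_subset (Finset.subset_univ _) (by
    intro i _ hi
    simp [Finsupp.notMem_support_iff.mp hi])).symm

lemma phiA_monomial (k : Type) [Field k] {m n : ℕ} (A : Matrix (Fin m) (Fin n) ℤ)
    (d : Fin n →₀ ℕ) (c : k) :
    phiA k A (monomial d c) = AddMonoidAlgebra.single (gA A d) c := by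
  rw [phiA, aeval_monomial]
  have h1 : (d.prod fun i e => (AddMonoidAlgebra.single (fun j => A j i) (1 : k)) ^ e)
      = AddMonoidAlgebra.single (gA A d) 1 := by
    rw [Finsupp.prod]
    have : ∀ i ∈ d.support,
        (AddMonoidAlgebra.single (fun j => A j i) (1 : k)) ^ (d i)
          = AddMonoidAlgebra.single (d i • fun j => A j i) 1 := by
      intro i _
      rw [AddMonoidAlgebra.single_pow, one_pow]
    rw [Finset.prod_congr rfl this, AddMonoidAlgebra.prod_single, Finset.prod_const_one]
    congr 1
    rw [gA_support]
    funext j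
    rw [Finset.sum_apply]
    refine Finset.sum_congr rfl fun i _ => ?_
    simp [mul_comm]
  rw [h1]
  have h2 : (algebraMap k (AddMonoidAlgebra k (Fin m → ℤ))) c
      = AddMonoidAlgebra.single 0 c := rfl
  rw [h2, AddMonoidAlgebra.single_mul_single, zero_add, mul_one]

lemma phiA_eq_mapDomain (k : Type) [Field k] {m n : ℕ} (A : Matrix (Fin m) (Fin n) ℤ)
    (f : MvPolynomial (Fin n) k) :
    phiA k A f = AddMonoidAlgebra.mapDomain (gA A) f := by
  induction f using MvPolynomial.induction_on' with
  | monomial d c =>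
      rw [phiA_monomial]
      have : (monomial d c : MvPolynomial (Fin n) k) = AddMonoidAlgebra.single d c := rfl
      rw [this, AddMonoidAlgebra.mapDomain_single]
  | add p q hp hq =>
      rw [map_add, hp, hq]
      exact (AddMonoidAlgebra.mapDomain_add _ _ _).symm

/-- A choice of preimage for `gA A`. -/
noncomputable def hA {m n : ℕ} (A : Matrix (Fin m) (Fin n) ℤ) (v : Fin m → ℤ) :
    Fin n →₀ ℕ :=
  Function.invFun (gA A) v

lemma gA_hA {m n : ℕ} (A : Matrix (Fin m) (Fin n) ℤ) (d : Fin n →₀ ℕ) :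
    gA A (hA A (gA A d)) = gA A d :=
  Function.invFun_eq ⟨d, rfl⟩

lemma gA_eq_of_mulVec_zero {m n : ℕ} {A : Matrix (Fin m) (Fin n) ℤ}
    {u : Fin n → ℤ} (hu : A.mulVec u = 0) :
    gA A (_root_.posPart u) = gA A (_root_.posPart (-u)) := by
  funext j
  have h := congrFun hu j
  simp only [Matrix.mulVec, dotProduct, Pi.zero_apply] at h
  have : ∑ i, ((_root_.posPart u i : ℤ) * A j i - (_root_.posPart (-u) i : ℤ) * A j i)
      = ∑ i, A j i * u i := by
    apply Finset.sum_congr rfl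
    intro i _
    rw [posPart_apply, posPart_apply, ← sub_mul]
    have hne : ((-u) i) = -(u i) := rfl
    rw [hne]
    have : ((u i).toNat : ℤ) - ((-(u i)).toNat : ℤ) = u i := by omega
    rw [this, mul_comm]
  have h2 : (∑ i, (_root_.posPart u i : ℤ) * A j i) - ∑ i, (_root_.posPart (-u) i : ℤ) * A j i = 0 := by
    rw [← Finset.sum_sub_distrib, this, h]
  simp only [gA]
  linarith

lemma binomial_mem {k : Type} [Field k] {m n : ℕ} {A : Matrix (Fin m) (Fin n) ℤ}
    (a b : Fin n →₀ ℕ) (hab : gA A a = gA A b) :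
    (monomial a 1 - monomial b 1 : MvPolynomial (Fin n) k) ∈
      Ideal.span {f : MvPolynomial (Fin n) k |
        ∃ u : Fin n → ℤ, A.mulVec u = 0 ∧
          f = monomial (_root_.posPart u) 1 - monomial (_root_.posPart (-u)) 1} := by
  set u : Fin n → ℤ := fun i => (a i : ℤ) - (b i : ℤ) with hu_def
  have hu : A.mulVec u = 0 := by
    funext j
    have h := congrFun hab j
    simp only [gA] at h
    simp only [Matrix.mulVec, dotProduct, Pi.zero_apply, hu_def]
    have : ∑ i, A j i * ((a i : ℤ) - (b i : ℤ))
        = (∑ i, (a i : ℤ) * A j i) - ∑ i, (b i : ℤ) * A j i := by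
      rw [← Finset.sum_sub_distrib]
      apply Finset.sum_congr rfl
      intro i _
      ring
    rw [this, h, sub_self]
  set c : Fin n →₀ ℕ := Finsupp.equivFunOnFinite.symm fun i => min (a i) (b i) with hc_def
  have hc_apply : ∀ i, c i = min (a i) (b i) := by intro i; simp [hc_def]
  have ha : a = c + _root_.posPart u := by
    ext i
    rw [Finsupp.add_apply, hc_apply, posPart_apply]
    have : u i = (a i : ℤ) - (b i : ℤ) := rfl
    rw [this]
    omega
  have hb : b = c + _root_.posPart (-u) := by
    ext i
    rw [Finsupp.add_apply, hc_apply, posPart_apply]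
    have : (-u) i = (b i : ℤ) - (a i : ℤ) := by
      show -(u i) = _
      have : u i = (a i : ℤ) - (b i : ℤ) := rfl
      rw [this]; ring
    rw [this]
    omega
  have key : (monomial a 1 - monomial b 1 : MvPolynomial (Fin n) k)
      = monomial c 1 * (monomial (_root_.posPart u) 1 - monomial (_root_.posPart (-u)) 1) := by
    rw [mul_sub, monomial_mul, monomial_mul, ← ha, ← hb, one_mul]
  rw [key]
  exact Ideal.mul_mem_left _ _ (Ideal.subset_span ⟨u, hu, rfl⟩)

/-- `ker φ_A` is generated by the binomials `x^{u₊} − x^{u₋}` as `u` ranges over the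
integer kernel `{u ∈ ℤ^n : A·u = 0}`. -/
theorem stmt_2 (k : Type) [Field k] (m n : ℕ) (A : Matrix (Fin m) (Fin n) ℤ) :
    RingHom.ker (phiA k A) =
      Ideal.span {f : MvPolynomial (Fin n) k |
        ∃ u : Fin n → ℤ, A.mulVec u = 0 ∧
          f = monomial (posPart u) 1 - monomial (posPart (-u)) 1} := by
  apply le_antisymm
  · -- ker ⊆ span
    intro f hf
    rw [RingHom.mem_ker] at hf
    rw [phiA_eq_mapDomain] at hf
    have h0 : AddMonoidAlgebra.mapDomain (hA A) (AddMonoidAlgebra.mapDomain (gA A) f) = 0 := by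
      rw [hf, AddMonoidAlgebra.mapDomain_zero]
    have hdecomp : f = ∑ a ∈ f.support,
        C (coeff a f) * (monomial a 1 - monomial (hA A (gA A a)) 1) := by
      have e1 : ∑ a ∈ f.support, C (coeff a f) * (monomial a 1 : MvPolynomial (Fin n) k)
          = f := by
        conv_rhs => rw [f.as_sum]
        apply Finset.sum_congr rfl
        intro a _
        rw [C_mul_monomial, mul_one]
      have e2 : ∑ a ∈ f.support,
          C (coeff a f) * (monomial (hA A (gA A a)) 1 : MvPolynomial (Fin n) k) = 0 := by
        have : ∑ a ∈ f.support,
            C (coeff a f) * (monomial (hA A (gA A a)) 1 : MvPolynomial (Fin n) k)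
            = AddMonoidAlgebra.mapDomain (hA A) (AddMonoidAlgebra.mapDomain (gA A) f) := by
          have hsum : ∀ {M N : Type} (g : M → N) (s : Finset (Fin n →₀ ℕ))
              (F : (Fin n →₀ ℕ) → AddMonoidAlgebra k M),
              AddMonoidAlgebra.mapDomain g (∑ a ∈ s, F a) = ∑ a ∈ s, AddMonoidAlgebra.mapDomain g (F a) :=
            fun g s F => map_sum (AddMonoidHom.mk' (AddMonoidAlgebra.mapDomain g)
              (AddMonoidAlgebra.mapDomain_add g)) F s
          conv_rhs => rw [f.as_sum]
          rw [hsum, hsum]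
          apply Finset.sum_congr rfl
          intro a _
          rw [C_mul_monomial, mul_one]
          have hm : (monomial a (coeff a f) : MvPolynomial (Fin n) k)
              = AddMonoidAlgebra.single a (coeff a f) := rfl
          rw [hm, AddMonoidAlgebra.mapDomain_single, AddMonoidAlgebra.mapDomain_single]
          rfl
        rw [this, h0]
      calc f = (∑ a ∈ f.support, C (coeff a f) * (monomial a 1 : MvPolynomial (Fin n) k))
            - ∑ a ∈ f.support, C (coeff a f) * (monomial (hA A (gA A a)) 1) := by
              rw [e1, e2, sub_zero]
        _ = ∑ a ∈ f.support,
              C (coeff a f) * (monomial a 1 - monomial (hA A (gA A a)) 1) := by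
              rw [← Finset.sum_sub_distrib]
              apply Finset.sum_congr rfl
              intro a _
              rw [mul_sub]
    rw [hdecomp]
    apply Ideal.sum_mem
    intro a _
    exact Ideal.mul_mem_left _ _ (binomial_mem a _ (gA_hA A a).symm)
  · -- span ⊆ ker
    rw [Ideal.span_le]
    rintro f ⟨u, hu, rfl⟩
    simp only [SetLike.mem_coe, RingHom.mem_ker]
    rw [map_sub, phiA_monomial k A, phiA_monomial k A, gA_eq_of_mulVec_zero hu, sub_self]
end

section
/- Let k be a field, let à ∈ M_{m,n}(ℤ) have columns α_1,…,α_n ∈ ℤ^m, let γ = (γ_1,…,γ_n) ∈ ℤ^n and γ_{n+1} ∈ ℤ with γ_{n+1} ≠ 0, and let A ∈ M_{m+1,n+1}(ℤ) be the block matrix A = [[Ã, 0],[γ, γ_{n+1}]]. Let φ : k[z_1,…,z_n,x] → k[t_1^{±1},…,t_m^{±1}, s^{±1}] be the k-algebra homomorphism with φ(z_i) = t^{α_i} s^{γ_i} for 1 ≤ i ≤ n and φ(x) = s^{γ_{n+1}}, and let I := ker φ. Assume that I is a homogeneous ideal of k[z_1,…,z_n,x] with respect to total degree. Let φ̃ :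 k[z_1,…,z_n] → k[t_1^{±1},…,t_m^{±1}] be the k-algebra homomorphism with φ̃(z_i) = t^{α_i}. Then the homogenization of ker φ̃ with respect to the variable x equals I, i.e. (ker φ̃)^{hom_x} = I. -/
open MvPolynomial

/-- An ideal of a multivariate polynomial ring is homogeneous with respect to the
standard grading by total degree iff it contains every homogeneous component of
each of its elements. -/
def IsHomogIdeal {k : Type} [CommRing k] {σ : Type} (I : Ideal (MvPolynomial σ k)) : Prop :=
  ∀ f ∈ I, ∀ d : ℕ, MvPolynomial.homogeneousComponent d f ∈ I

/-- The homogenization `f^{hom_x} = x^{deg f}·f(z₁/x,…,zₙ/x)` of `f ∈ k[z₁,…,zₙ]` with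
respect to a new variable `x` (here `Sum.inr ()`): each monomial `z^u` of `f` is multiplied
by `x^{deg f − |u|}`. -/
noncomputable def homogenize {k : Type} [CommRing k] {n : ℕ}
    (f : MvPolynomial (Fin n) k) : MvPolynomial (Fin n ⊕ Unit) k :=
  ∑ u ∈ f.support,
    monomial
      (Finsupp.mapDomain Sum.inl u +
        Finsupp.single (Sum.inr ()) (f.totalDegree - u.sum fun _ e => e))
      (f.coeff u)

/-- The homogenization of an ideal `I ⊆ k[z₁,…,zₙ]` with respect to the new variable `x`. -/
noncomputable def homogenizeIdeal {k : Type} [CommRing k] {n : ℕ}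
    (I : Ideal (MvPolynomial (Fin n) k)) : Ideal (MvPolynomial (Fin n ⊕ Unit) k) :=
  Ideal.span {g | ∃ f ∈ I, g = homogenize f}

namespace Stmt6Aux

section singles
variable {k : Type} [Field k]

lemma prod_single_one {G ι : Type*} [AddCommMonoid G] (s : Finset ι) (f : ι → G) :
    (∏ i ∈ s, AddMonoidAlgebra.single (f i) (1 : k)) =
      AddMonoidAlgebra.single (∑ i ∈ s, f i) 1 := by
  classical
  induction s using Finset.induction_on with
  | empty => simp [AddMonoidAlgebra.one_def]
  | insert _ _ h ih =>
      rw [Finset.prod_insert h, ih, AddMonoidAlgebra.single_mul_single, one_mul,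
        Finset.sum_insert h]

lemma aeval_single_monomial {σ G : Type*} [AddCommMonoid G] (a : σ → G)
    (w : σ →₀ ℕ) (c : k) :
    MvPolynomial.aeval (fun i => AddMonoidAlgebra.single (a i) (1:k)) (monomial w c) =
      AddMonoidAlgebra.single (w.sum fun i e => e • a i) c := by
  classical
  rw [aeval_monomial]
  have h1 : (w.prod fun i e => AddMonoidAlgebra.single (a i) (1:k) ^ e) =
      AddMonoidAlgebra.single (w.sum fun i e => e • a i) (1:k) := by
    rw [Finsupp.prod, Finsupp.sum]
    simp_rw [AddMonoidAlgebra.single_pow, one_pow]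
    exact prod_single_one _ _
  rw [h1]
  have h2 : (algebraMap k (AddMonoidAlgebra k G)) c = AddMonoidAlgebra.single 0 c := by
    simp [AddMonoidAlgebra.coe_algebraMap]
  rw [h2, AddMonoidAlgebra.single_mul_single, zero_add, mul_one]

lemma sum_single_eq_zero_iff {G ι : Type*} [AddCommMonoid G] [DecidableEq G] (s : Finset ι)
    (E : ι → G) (c : ι → k) :
    (∑ i ∈ s, AddMonoidAlgebra.single (E i) (c i)) = 0 ↔
      ∀ v : G, (∑ i ∈ s, if E i = v then c i else 0) = 0 := by
  classical
  rw [← AddMonoidAlgebra.coeff_inj, AddMonoidAlgebra.coeff_zero, Finsupp.ext_iff]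
  apply forall_congr'
  intro v
  rw [AddMonoidAlgebra.coeff_sum, Finsupp.finset_sum_apply]
  simp_rw [AddMonoidAlgebra.coeff_single, Finsupp.single_apply]
  rfl

end singles

section helpers
variable {α β M : Type*} [AddCommMonoid M]

lemma sum_smul_add (f g : α →₀ ℕ) (x : α → M) :
    ((f + g).sum fun i e => e • x i) =
      (f.sum fun i e => e • x i) + (g.sum fun i e => e • x i) :=
  Finsupp.sum_add_index' (fun i => zero_smul ℕ (x i)) (fun i b₁ b₂ => add_smul b₁ b₂ (x i))

lemma sum_smul_single (a : α) (N : ℕ) (x : α → M) :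
    ((Finsupp.single a N).sum fun i e => e • x i) = N • x a :=
  Finsupp.sum_single_index (zero_smul ℕ (x a))

lemma sum_smul_mapDomain (h : α → β) (f : α →₀ ℕ) (x : β → M) :
    ((Finsupp.mapDomain h f).sum fun i e => e • x i) =
      f.sum fun i e => e • x (h i) :=
  Finsupp.sum_mapDomain_index (fun b => zero_smul ℕ (x b))
    (fun b b₁ b₂ => add_smul b₁ b₂ (x b))

lemma sum_smul_smul (c : ℕ) (f : α →₀ ℕ) (x : α → M) :
    ((c • f).sum fun i e => e • x i) = c • (f.sum fun i e => e • x i) := by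
  rw [Finsupp.sum_smul_index' (fun i => zero_smul ℕ (x i)), Finsupp.smul_sum]
  simp_rw [smul_eq_mul, mul_smul]

end helpers

variable {m n : ℕ}

/-- total degree of an exponent vector -/
def deg {σ : Type*} (w : σ →₀ ℕ) : ℕ := w.sum fun _ e => e

lemma deg_eq_degree {σ : Type*} (w : σ →₀ ℕ) : deg w = w.degree := rfl

lemma deg_eq_sum_smul {σ : Type*} (w : σ →₀ ℕ) : deg w = w.sum fun _ e => e • 1 := by
  unfold deg; simp

variable (Atil : Matrix (Fin m) (Fin n) ℤ) (γ : Fin n → ℤ) (γlast : ℤ)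

/-- the columns of Atil -/
def atil : Fin n → (Fin m → ℤ) := fun i j => Atil j i

/-- combined column map -/
def acol : Fin n ⊕ Unit → (Fin m → ℤ) × ℤ :=
  Sum.elim (fun i' => (atil Atil i', γ i')) (fun _ => (0, γlast))

/-- exponent map for φ -/
def Ef (w : Fin n ⊕ Unit →₀ ℕ) : (Fin m → ℤ) × ℤ :=
  w.sum fun i e => e • acol Atil γ γlast i

/-- exponent map for φtil -/
def Et (u : Fin n →₀ ℕ) : Fin m → ℤ := u.sum fun i e => e • atil Atil i

/-- γ-weight of an exponent vector -/
def Gv (u : Fin n →₀ ℕ) : ℤ := u.sum fun i e => e • γ i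

/-- abbreviation for inl-embedding of exponents -/
noncomputable def ι (u : Fin n →₀ ℕ) : Fin n ⊕ Unit →₀ ℕ := Finsupp.mapDomain Sum.inl u

lemma Ef_apply (u : Fin n →₀ ℕ) (N : ℕ) :
    Ef Atil γ γlast (ι u + Finsupp.single (Sum.inr ()) N) =
      (Et Atil u, Gv γ u + N • γlast) := by
  classical
  unfold Ef ι
  rw [sum_smul_add, sum_smul_single, sum_smul_mapDomain]
  have : (u.sum fun i e => e • acol Atil γ γlast (Sum.inl i)) = (Et Atil u, Gv γ u) := by
    rw [Finsupp.sum, Prod.ext_iff]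
    constructor
    · rw [Prod.fst_sum]; simp only [acol, Sum.elim_inl, Prod.smul_mk]; rfl
    · rw [Prod.snd_sum]; simp only [acol, Sum.elim_inl, Prod.smul_mk]; rfl
  rw [this]
  simp only [acol, Sum.elim_inr, Prod.smul_mk, smul_zero, Prod.mk_add_mk, add_zero]

lemma Ef_apply' (u : Fin n →₀ ℕ) (N : ℕ) :
    Ef Atil γ γlast (Finsupp.mapDomain Sum.inl u + Finsupp.single (Sum.inr ()) N) =
      (Et Atil u, Gv γ u + N • γlast) := Ef_apply Atil γ γlast u N

lemma deg_apply (u : Fin n →₀ ℕ) (N : ℕ) :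
    deg (ι u + Finsupp.single (Sum.inr ()) N) = deg u + N := by
  classical
  rw [deg_eq_sum_smul]
  unfold ι
  rw [sum_smul_add, sum_smul_single, sum_smul_mapDomain]
  rw [← deg_eq_sum_smul]
  simp

lemma Et_smul (c : ℕ) (u : Fin n →₀ ℕ) : Et Atil (c • u) = c • Et Atil u :=
  sum_smul_smul c u _

lemma Gv_smul (c : ℕ) (u : Fin n →₀ ℕ) : Gv γ (c • u) = c • Gv γ u :=
  sum_smul_smul c u _

lemma deg_smul' (c : ℕ) (u : Fin n →₀ ℕ) : deg (c • u) = c • deg u := by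
  rw [deg_eq_sum_smul, deg_eq_sum_smul, sum_smul_smul]

/-- restriction of exponent vector on Fin n ⊕ Unit to Fin n -/
noncomputable def res (W : Fin n ⊕ Unit →₀ ℕ) : Fin n →₀ ℕ :=
  Finsupp.equivFunOnFinite.symm fun i => W (Sum.inl i)

lemma res_apply (W : Fin n ⊕ Unit →₀ ℕ) (i : Fin n) : res W i = W (Sum.inl i) := rfl

lemma res_decomp (W : Fin n ⊕ Unit →₀ ℕ) :
    ι (res W) + Finsupp.single (Sum.inr ()) (W (Sum.inr ())) = W := by
  classical
  ext i
  cases i with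
  | inl j =>
      rw [Finsupp.add_apply]
      unfold ι
      rw [Finsupp.mapDomain_apply Sum.inl_injective, Finsupp.single_apply, res_apply]
      simp
  | inr u =>
      cases u
      rw [Finsupp.add_apply]
      unfold ι
      rw [Finsupp.mapDomain_notin_range]
      · simp
      · simp

lemma res_decomp' (W : Fin n ⊕ Unit →₀ ℕ) :
    Finsupp.mapDomain Sum.inl (res W) + Finsupp.single (Sum.inr ()) (W (Sum.inr ())) = W :=
  res_decomp W

lemma res_ι (u : Fin n →₀ ℕ) (N : ℕ) :
    res (ι u + Finsupp.single (Sum.inr ()) N) = u := by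
  classical
  ext i
  rw [res_apply, Finsupp.add_apply]
  unfold ι
  rw [Finsupp.mapDomain_apply Sum.inl_injective, Finsupp.single_apply]
  simp

end Stmt6Aux

open Stmt6Aux

/-- If `I = ker φ` is a homogeneous toric ideal of `k[z,x]` where `φ(z_i) = t^{α_i} s^{γ_i}`
and `φ(x) = s^{γ_{n+1}}` with `γ_{n+1} ≠ 0`, and `φ̃(z_i) = t^{α_i}` is the dehomogenized
parametrization, then `(ker φ̃)^{hom_x} = I`. -/
theorem stmt_6 (k : Type) [Field k] (m n : ℕ) (Atil : Matrix (Fin m) (Fin n) ℤ)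
    (γ : Fin n → ℤ) (γlast : ℤ) (hγlast : γlast ≠ 0)
    (φ : MvPolynomial (Fin n ⊕ Unit) k →ₐ[k] AddMonoidAlgebra k ((Fin m → ℤ) × ℤ))
    (hφ : φ = MvPolynomial.aeval (Sum.elim
        (fun i => AddMonoidAlgebra.single ((fun j => Atil j i), γ i) 1)
        (fun _ => AddMonoidAlgebra.single ((0 : Fin m → ℤ), γlast) 1)))
    (hI : IsHomogIdeal (RingHom.ker φ))
    (φtil : MvPolynomial (Fin n) k →ₐ[k] AddMonoidAlgebra k (Fin m → ℤ))
    (hφtil : φtil = MvPolynomial.aeval fun i => AddMonoidAlgebra.single (fun j => Atil j i) 1) :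
    homogenizeIdeal (RingHom.ker φtil) = RingHom.ker φ := by
  classical
  -- monomial formulas
  have hacol : (Sum.elim
        (fun i => AddMonoidAlgebra.single ((fun j => Atil j i), γ i) (1:k))
        (fun _ => AddMonoidAlgebra.single ((0 : Fin m → ℤ), γlast) 1))
      = fun i => AddMonoidAlgebra.single (acol Atil γ γlast i) (1:k) := by
    funext i; cases i <;> rfl
  have hφmono : ∀ (w : Fin n ⊕ Unit →₀ ℕ) (c : k),
      φ (monomial w c) = AddMonoidAlgebra.single (Ef Atil γ γlast w) c := by
    intro w c
    rw [hφ, hacol, aeval_single_monomial]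
    rfl
  have hφtmono : ∀ (u : Fin n →₀ ℕ) (c : k),
      φtil (monomial u c) = AddMonoidAlgebra.single (Et Atil u) c := by
    intro u c
    rw [hφtil]
    rw [show (fun i => AddMonoidAlgebra.single (fun j => Atil j i) (1:k))
        = fun i => AddMonoidAlgebra.single (atil Atil i) (1:k) from rfl,
      aeval_single_monomial]
    rfl
  have hφ_apply : ∀ p : MvPolynomial (Fin n ⊕ Unit) k,
      φ p = ∑ w ∈ p.support, AddMonoidAlgebra.single (Ef Atil γ γlast w) (coeff w p) := by
    intro p
    conv_lhs => rw [p.as_sum, map_sum]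
    exact Finset.sum_congr rfl fun w _ => hφmono w _
  have hφt_apply : ∀ p : MvPolynomial (Fin n) k,
      φtil p = ∑ u ∈ p.support, AddMonoidAlgebra.single (Et Atil u) (coeff u p) := by
    intro p
    conv_lhs => rw [p.as_sum, map_sum]
    exact Finset.sum_congr rfl fun u _ => hφtmono u _
  have hker : ∀ p : MvPolynomial (Fin n ⊕ Unit) k, p ∈ RingHom.ker φ ↔
      ∀ v, (∑ w ∈ p.support, if Ef Atil γ γlast w = v then coeff w p else 0) = 0 := by
    intro p
    rw [RingHom.mem_ker, hφ_apply p, sum_single_eq_zero_iff]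
  have hkert : ∀ p : MvPolynomial (Fin n) k, p ∈ RingHom.ker φtil ↔
      ∀ v, (∑ u ∈ p.support, if Et Atil u = v then coeff u p else 0) = 0 := by
    intro p
    rw [RingHom.mem_ker, hφt_apply p, sum_single_eq_zero_iff]
  -- the key consequence of homogeneity of ker φ
  have keyA : ∀ u u' : Fin n →₀ ℕ, Et Atil u = Et Atil u' →
      Gv γ u + γlast * (deg u' : ℤ) = Gv γ u' + γlast * (deg u : ℤ) := by
    intro u u' hEt
    set c : ℕ := γlast.natAbs with hc
    have hc0 : (c : ℤ) = |γlast| := (Int.abs_eq_natAbs γlast).symm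
    have hcz : (c : ℤ) ≠ 0 := by
      rw [hc0]; exact abs_ne_zero.mpr hγlast
    obtain ⟨δ, hδ⟩ : ∃ δ : ℤ, γlast * δ = (c:ℤ) * (Gv γ u' - Gv γ u) := by
      rcases le_or_gt 0 γlast with h | h
      · exact ⟨Gv γ u' - Gv γ u, by rw [hc0, abs_of_nonneg h]⟩
      · exact ⟨-(Gv γ u' - Gv γ u), by rw [hc0, abs_of_neg h]; ring⟩
    have hNN' : ((δ.toNat : ℤ)) - (((-δ).toNat : ℤ)) = δ := by omega
    set N : ℕ := δ.toNat with hN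
    set N' : ℕ := (-δ).toNat with hN'
    set W := ι (c • u) + Finsupp.single (Sum.inr ()) N with hW
    set W' := ι (c • u') + Finsupp.single (Sum.inr ()) N' with hW'
    have hEq : Ef Atil γ γlast W = Ef Atil γ γlast W' := by
      rw [hW, hW', Ef_apply, Ef_apply, Et_smul, Et_smul, hEt]
      refine Prod.ext rfl ?_
      show Gv γ (c • u) + N • γlast = Gv γ (c • u') + N' • γlast
      rw [Gv_smul, Gv_smul]
      have e1 : ∀ x : ℤ, c • x = (c:ℤ) * x := fun x => nsmul_eq_mul c x
      have e2 : ∀ (M : ℕ), M • γlast = (M:ℤ) * γlast := fun M => nsmul_eq_mul M γlast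
      rw [e1, e1, e2, e2]
      linear_combination γlast * hNN' + hδ
    have hdegW : deg W = deg W' := by
      by_cases hWW : W = W'
      · rw [hWW]
      · by_contra hne
        have hker_p : (monomial W (1:k) - monomial W' 1) ∈ RingHom.ker φ := by
          rw [RingHom.mem_ker, map_sub, hφmono, hφmono, hEq, sub_self]
        have hcomp := hI _ hker_p (deg W)
        have hcompeq : homogeneousComponent (deg W) (monomial W (1:k) - monomial W' 1)
            = monomial W 1 := by
          ext v
          rw [coeff_homogeneousComponent, coeff_sub, coeff_monomial, coeff_monomial]
          by_cases hv : v.degree = deg W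
          · rw [if_pos hv]
            have hvW' : W' ≠ v := by
              intro h
              apply hne
              rw [deg_eq_degree W', h, hv]
            rw [if_neg hvW', sub_zero]
          · rw [if_neg hv]
            have hvW : W ≠ v := by
              intro h
              apply hv
              rw [← h, ← deg_eq_degree]
            rw [if_neg hvW]
        rw [hcompeq, RingHom.mem_ker, hφmono] at hcomp
        exact one_ne_zero (AddMonoidAlgebra.single_eq_zero.mp hcomp)
    rw [hW, hW', deg_apply, deg_apply, deg_smul', deg_smul'] at hdegW
    have hdegZ : (c:ℤ) * (deg u) + N = (c:ℤ) * (deg u') + N' := by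
      have := hdegW
      simp only [smul_eq_mul] at this
      exact_mod_cast congrArg (fun x : ℕ => (x : ℤ)) this
    apply mul_left_cancel₀ hcz
    rw [hN, hN'] at hdegZ
    linear_combination (-γlast) * hdegZ + γlast * hNN' + hδ
  -- Part B : homogenization of kernel elements lies in ker φ
  have partB : ∀ f ∈ RingHom.ker φtil, homogenize f ∈ RingHom.ker φ := by
    intro f hf
    have hf' := (hkert f).mp hf
    rw [RingHom.mem_ker]
    have hval : φ (homogenize f) = ∑ u ∈ f.support,
        AddMonoidAlgebra.single
          ((Et Atil u, Gv γ u + (f.totalDegree - deg u) • γlast)) (coeff u f) := by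
      rw [homogenize, map_sum]
      refine Finset.sum_congr rfl fun u hu => ?_
      rw [hφmono, Ef_apply']
      rfl
    rw [hval, sum_single_eq_zero_iff]
    rintro ⟨v1, v2⟩
    by_cases hex : ∃ u0 ∈ f.support, Et Atil u0 = v1 ∧
        Gv γ u0 + (f.totalDegree - deg u0) • γlast = v2
    · obtain ⟨u0, hu0s, hu01, hu02⟩ := hex
      have hcong : ∀ u ∈ f.support,
          (if (Et Atil u, Gv γ u + (f.totalDegree - deg u) • γlast) = (v1, v2)
            then coeff u f else 0)
          = (if Et Atil u = v1 then coeff u f else 0) := by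
        intro u hu
        by_cases h1 : Et Atil u = v1
        · rw [if_pos h1, if_pos]
          refine Prod.ext h1 ?_
          show Gv γ u + (f.totalDegree - deg u) • γlast = v2
          rw [← hu02]
          have hk := keyA u u0 (h1.trans hu01.symm)
          have hu_le : deg u ≤ f.totalDegree := le_totalDegree hu
          have hu0_le : deg u0 ≤ f.totalDegree := le_totalDegree hu0s
          have c1 : ((f.totalDegree - deg u : ℕ) : ℤ) =
              (f.totalDegree : ℤ) - deg u := by omega
          have c2 : ((f.totalDegree - deg u0 : ℕ) : ℤ) =
              (f.totalDegree : ℤ) - deg u0 := by omega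
          rw [nsmul_eq_mul, nsmul_eq_mul, c1, c2]
          linarith [hk]
        · rw [if_neg h1, if_neg]
          intro h
          exact h1 (congrArg Prod.fst h)
      rw [Finset.sum_congr rfl hcong]
      exact hf' v1
    · refine Finset.sum_eq_zero fun u hu => ?_
      rw [if_neg]
      intro h
      exact hex ⟨u, hu, congrArg Prod.fst h, congrArg Prod.snd h⟩
  -- Part C : homogeneous elements of ker φ lie in the homogenization
  have partC : ∀ (d : ℕ) (g : MvPolynomial (Fin n ⊕ Unit) k), g ∈ RingHom.ker φ →
      (∀ W ∈ g.support, deg W = d) → g ∈ homogenizeIdeal (RingHom.ker φtil) := by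
    intro d g hgker hgdeg
    set f : MvPolynomial (Fin n) k := ∑ W ∈ g.support, monomial (res W) (coeff W g) with hfdef
    have hdegres : ∀ W ∈ g.support, deg (res W) + W (Sum.inr ()) = d := by
      intro W hW
      have h1 := deg_apply (res W) (W (Sum.inr ()))
      rw [res_decomp] at h1
      rw [← h1, hgdeg W hW]
    have hinj : ∀ W ∈ g.support, ∀ W' ∈ g.support, res W = res W' → W = W' := by
      intro W hW W' hW' hres
      have h1 := hdegres W hW
      have h2 := hdegres W' hW'
      rw [hres] at h1
      have h3 : W (Sum.inr ()) = W' (Sum.inr ()) := by omega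
      rw [← res_decomp W, ← res_decomp W', hres, h3]
    have hcoeff : ∀ W ∈ g.support, coeff (res W) f = coeff W g := by
      intro W hW
      rw [hfdef, coeff_sum]
      rw [Finset.sum_eq_single_of_mem W hW]
      · rw [coeff_monomial, if_pos rfl]
      · intro W' hW' hne
        rw [coeff_monomial, if_neg]
        exact fun h => hne (hinj W' hW' W hW h)
    have hcoeff0 : ∀ u, u ∉ g.support.image res → coeff u f = 0 := by
      intro u hu
      rw [hfdef, coeff_sum]
      refine Finset.sum_eq_zero fun W hW => ?_
      rw [coeff_monomial, if_neg]
      exact fun h => hu (Finset.mem_image.mpr ⟨W, hW, h⟩)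
    have hsupp : f.support = g.support.image res := by
      ext u
      simp only [mem_support_iff]
      constructor
      · intro h
        by_contra hc
        exact h (hcoeff0 u hc)
      · intro h
        obtain ⟨W, hW, rfl⟩ := Finset.mem_image.mp h
        rw [hcoeff W hW]
        exact mem_support_iff.mp hW
    have hEtres : ∀ W : Fin n ⊕ Unit →₀ ℕ, Et Atil (res W) = (Ef Atil γ γlast W).1 := by
      intro W
      conv_rhs => rw [← res_decomp W]
      rw [Ef_apply]
    -- f ∈ ker φtil
    have hfker : f ∈ RingHom.ker φtil := by
      have hg0 : φ g = 0 := hgker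
      have hmap : AddMonoidAlgebra.mapDomain Prod.fst (φ g)
          = ∑ W ∈ g.support, AddMonoidAlgebra.single ((Ef Atil γ γlast W).1) (coeff W g) := by
        rw [hφ_apply g]
        ext1
        simp [Finsupp.mapDomain_finset_sum]
      rw [hg0, AddMonoidAlgebra.mapDomain_zero] at hmap
      rw [RingHom.mem_ker, hφt_apply, hsupp, Finset.sum_image hinj]
      rw [Finset.sum_congr rfl fun W hW => by rw [hcoeff W hW, hEtres W]]
      exact hmap.symm
    -- the identity g = homogenize f * x^(d - D)
    set D := f.totalDegree with hD
    have hDle : D ≤ d := by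
      rw [hD, totalDegree]
      apply Finset.sup_le
      intro u hu
      rw [hsupp] at hu
      obtain ⟨W, hW, rfl⟩ := Finset.mem_image.mp hu
      have := hdegres W hW
      show deg (res W) ≤ d
      omega
    have hid : homogenize f * (X (Sum.inr ()) : MvPolynomial (Fin n ⊕ Unit) k) ^ (d - D) = g := by
      rw [homogenize, Finset.sum_mul, X_pow_eq_monomial]
      conv_rhs => rw [g.as_sum]
      rw [hsupp, Finset.sum_image hinj]
      refine Finset.sum_congr rfl fun W hW => ?_
      rw [monomial_mul, mul_one, hcoeff W hW]
      have hres_mem : res W ∈ f.support := by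
        rw [hsupp]; exact Finset.mem_image.mpr ⟨W, hW, rfl⟩
      have hresD : deg (res W) ≤ D := le_totalDegree hres_mem
      have harith : (D - ((res W).sum fun _ e => e)) + (d - D) = W (Sum.inr ()) := by
        show D - deg (res W) + (d - D) = W (Sum.inr ())
        have := hdegres W hW
        omega
      congr 1
      rw [add_assoc, ← Finsupp.single_add, harith]
      exact congrArg monomial (res_decomp' W)
    rw [← hid]
    exact Ideal.mul_mem_right _ _ (Ideal.subset_span ⟨f, hfker, rfl⟩)
  -- assemble
  apply le_antisymm
  · rw [homogenizeIdeal, Ideal.span_le]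
    rintro g ⟨f, hf, rfl⟩
    exact partB f hf
  · intro p hp
    rw [← sum_homogeneousComponent p]
    refine Ideal.sum_mem _ fun i _ => ?_
    refine partC i _ (hI p hp i) fun W hW => ?_
    have hne := mem_support_iff.mp hW
    rw [coeff_homogeneousComponent] at hne
    rw [deg_eq_degree]
    by_contra h
    rw [if_neg h] at hne
    exact hne rfl
end

section
/- Let k be a field and let A* ∈ M_{m',n}(ℤ) have rank m ≤ m' over ℚ. Then for every index i ∈ {1,…,n} such that the i-th column of A* is nonzero, there exists a matrix à ∈ M_{m,n}(ℤ) such that: (i) { u ∈ ℤ^n : Ã·u = 0 } = { u ∈ ℤ^n : A*·u = 0 }, so that the toric ideals satisfy ker φ_à = ker φ_{A*} in k[x_1,…,x_n]; (ii) à has rank m (so the corresponding parametrization into the Laurent polynomial ring in m variables has maximal rank); and (iii) the i-th column of à equals q·e_j for some positive integer q and some j ∈ {1,…,m}, i.e. the new parametrization φ_à satisfies φ_Ã(x_i) = t_j^q. -/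
open MvPolynomial

/-- The `k`-algebra homomorphism into the Laurent polynomial ring (group algebra `k[ℤ^ρ]`)
sending `x_i` to the Laurent monomial whose exponent vector is the `i`-th column of `B`. -/
noncomputable def phiB (k : Type) [Field k] {ρ : Type} {n : ℕ} (B : Matrix ρ (Fin n) ℤ) :
    MvPolynomial (Fin n) k →ₐ[k] AddMonoidAlgebra k (ρ → ℤ) :=
  MvPolynomial.aeval fun i => AddMonoidAlgebra.single (fun r => B r i) 1

open Module

lemma phiB_monomial (k : Type) [Field k] {ρ : Type} [Fintype ρ] {n : ℕ} (B : Matrix ρ (Fin n) ℤ)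
    (d : Fin n →₀ ℕ) (c : k) :
    phiB k B (monomial d c) =
      AddMonoidAlgebra.single (B.mulVec (fun i => (d i : ℤ))) c := by
  classical
  rw [phiB, aeval_monomial, Finsupp.prod]
  simp only [AddMonoidAlgebra.single_pow, one_pow]
  rw [AddMonoidAlgebra.prod_single]
  rw [Finset.prod_const, one_pow]
  have hsum : (∑ x ∈ d.support, (d x) • fun r => B r x) = B.mulVec (fun i => (d i : ℤ)) := by
    funext r
    rw [Finset.sum_apply]
    rw [Matrix.mulVec]
    simp only [Pi.smul_apply, smul_eq_mul, dotProduct]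
    rw [Finset.sum_subset (Finset.subset_univ d.support)]
    · apply Finset.sum_congr rfl; intro x _; ring
    · intro x _ hx
      simp [Finsupp.notMem_support_iff.mp hx]
  rw [hsum]
  rw [Algebra.algebraMap_eq_smul_one]
  rw [AddMonoidAlgebra.one_def]
  rw [smul_mul_assoc, AddMonoidAlgebra.single_mul_single, zero_add, one_mul,
    AddMonoidAlgebra.smul_single']
  rw [mul_one]

lemma phiB_apply (k : Type) [Field k] {ρ : Type} [Fintype ρ] {n : ℕ} (B : Matrix ρ (Fin n) ℤ)
    (f : MvPolynomial (Fin n) k) :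
    phiB k B f = ∑ d ∈ f.support,
      AddMonoidAlgebra.single (B.mulVec (fun i => (d i : ℤ))) (coeff d f) := by
  conv_lhs => rw [f.as_sum, map_sum]
  exact Finset.sum_congr rfl fun d _ => phiB_monomial k B d _

lemma phiB_coeff (k : Type) [Field k] {ρ : Type} [Fintype ρ] {n : ℕ} (B : Matrix ρ (Fin n) ℤ)
    (f : MvPolynomial (Fin n) k) (v : ρ → ℤ) :
    (phiB k B f).coeff v = ∑ d ∈ f.support,
      (if B.mulVec (fun i => (d i : ℤ)) = v then coeff d f else 0) := by
  classical
  rw [phiB_apply, AddMonoidAlgebra.coeff_sum, Finset.sum_apply']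
  exact Finset.sum_congr rfl fun d _ => AddMonoidAlgebra.coeff_single_apply

lemma mem_ker_phiB_iff (k : Type) [Field k] {ρ : Type} [Fintype ρ] {n : ℕ}
    (B : Matrix ρ (Fin n) ℤ) (f : MvPolynomial (Fin n) k) :
    f ∈ RingHom.ker (phiB k B) ↔ ∀ v : ρ → ℤ, (∑ d ∈ f.support,
      (if B.mulVec (fun i => (d i : ℤ)) = v then coeff d f else 0)) = 0 := by
  rw [RingHom.mem_ker]
  constructor
  · intro h v; rw [← phiB_coeff, h]; rfl
  · intro h
    apply AddMonoidAlgebra.ext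
    ext v
    rw [phiB_coeff, h v]; rfl

lemma ker_phiB_subset (k : Type) [Field k] {ρ₁ ρ₂ : Type} [Fintype ρ₁] [Fintype ρ₂] {n : ℕ}
    (B : Matrix ρ₁ (Fin n) ℤ) (C : Matrix ρ₂ (Fin n) ℤ)
    (h : ∀ u : Fin n → ℤ, B.mulVec u = 0 ↔ C.mulVec u = 0) :
    RingHom.ker (phiB k B) ≤ RingHom.ker (phiB k C) := by
  classical
  have hfib : ∀ a b : Fin n → ℤ, (B.mulVec a = B.mulVec b) ↔ (C.mulVec a = C.mulVec b) := by
    intro a b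
    rw [← sub_eq_zero, ← sub_eq_zero (a := C.mulVec a), ← Matrix.mulVec_sub, ← Matrix.mulVec_sub]
    exact h _
  intro f hf
  rw [mem_ker_phiB_iff] at hf ⊢
  intro w
  by_cases hex : ∃ d₀ ∈ f.support, C.mulVec (fun i => (d₀ i : ℤ)) = w
  · obtain ⟨d₀, hd₀, hw⟩ := hex
    have : ∀ d ∈ f.support,
        (if C.mulVec (fun i => (d i : ℤ)) = w then coeff d f else 0) =
        (if B.mulVec (fun i => (d i : ℤ)) = B.mulVec (fun i => (d₀ i : ℤ))
          then coeff d f else 0) := by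
      intro d _
      congr 1
      rw [eq_iff_iff, hfib, hw]
    rw [Finset.sum_congr rfl this]
    exact hf _
  · push_neg at hex
    apply Finset.sum_eq_zero
    intro d hd
    rw [if_neg (hex d hd)]

lemma mulVec_zero_iff_span {m n : ℕ} (M : Matrix (Fin m) (Fin n) ℚ) (u : Fin n → ℚ) :
    M.mulVec u = 0 ↔ ∀ w ∈ Submodule.span ℚ (Set.range M), dotProduct w u = 0 := by
  constructor
  · intro h w hw
    induction hw using Submodule.span_induction with
    | mem w hw => obtain ⟨r, rfl⟩ := hw; exact congrFun h r
    | zero => simp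
    | add x y _ _ hx hy => rw [add_dotProduct, hx, hy, add_zero]
    | smul c x _ hx => rw [smul_dotProduct, hx, smul_zero]
  · intro h
    funext r
    exact h (M r) (Submodule.subset_span ⟨r, rfl⟩)

lemma int_mulVec_zero_iff {m n : ℕ} (M : Matrix (Fin m) (Fin n) ℤ) (u : Fin n → ℤ) :
    M.mulVec u = 0 ↔ (M.map (Int.cast : ℤ → ℚ)).mulVec (fun j => (u j : ℚ)) = 0 := by
  have key : ∀ r, ((M.mulVec u r : ℤ) : ℚ)
      = (M.map (Int.cast : ℤ → ℚ)).mulVec (fun j => (u j : ℚ)) r := by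
    intro r
    have := (Int.castRingHom ℚ).map_mulVec M u r
    simp [Function.comp] at this; exact this
  constructor
  · intro h; funext r; rw [← key, h]; simp
  · intro h; funext r
    have := key r
    rw [h] at this
    simp only [Pi.zero_apply] at this ⊢
    exact_mod_cast this

lemma exists_int_scale {n : ℕ} (w : Fin n → ℚ) :
    ∃ (z : Fin n → ℤ) (N : ℕ), 0 < N ∧ (fun j => (z j : ℚ)) = (N : ℚ) • w := by
  classical
  refine ⟨fun j => (w j).num * ((∏ l, (w l).den) / (w j).den : ℕ), ∏ l, (w l).den,
    Finset.prod_pos fun j _ => (w j).pos, ?_⟩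
  funext j
  simp only [Pi.smul_apply, smul_eq_mul]
  have hdvd : (w j).den ∣ ∏ l, (w l).den := Finset.dvd_prod_of_mem _ (Finset.mem_univ j)
  obtain ⟨c, hc⟩ := hdvd
  have hq : w j * ((w j).den : ℚ) = ((w j).num : ℚ) := Rat.mul_den_eq_num (w j)
  rw [hc, Nat.mul_div_cancel_left c (w j).pos]
  push_cast
  rw [← hq]
  ring

set_option synthInstance.maxHeartbeats 1000000 in
set_option maxHeartbeats 1600000 in
theorem construction (m' m n : ℕ)
    (Astar : Matrix (Fin m') (Fin n) ℤ)
    (hrank : (Astar.map (Int.cast : ℤ → ℚ)).rank = m)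
    (i : Fin n) (hi : (fun r => Astar r i) ≠ (0 : Fin m' → ℤ)) :
    ∃ Atil : Matrix (Fin m) (Fin n) ℤ,
      {u : Fin n → ℤ | Atil.mulVec u = 0} = {u : Fin n → ℤ | Astar.mulVec u = 0} ∧
      (Atil.map (Int.cast : ℤ → ℚ)).rank = m ∧
      ∃ (q : ℕ) (j : Fin m), 0 < q ∧
        ∀ r : Fin m, Atil r i = if r = j then (q : ℤ) else 0 := by
  classical
  set V := Astar.map (Int.cast : ℤ → ℚ) with hVdef
  set W := Submodule.span ℚ (Set.range V) with hWdef
  have hWfin : finrank ℚ W = m := by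
    exact (Matrix.rank_eq_finrank_span_row V).symm.trans hrank
  have hAker : ∀ u : Fin n → ℤ, Astar.mulVec u = 0 ↔
      ∀ w ∈ W, dotProduct w (fun j => (u j : ℚ)) = 0 := by
    intro u; rw [int_mulVec_zero_iff, mulVec_zero_iff_span]
  obtain ⟨r0, hr0⟩ : ∃ r0, Astar r0 i ≠ 0 := by
    by_contra h; push_neg at h; exact hi (funext h)
  set v1 : Fin n → ℤ := if 0 < Astar r0 i then Astar r0 else -Astar r0 with hv1
  have hv1cases : v1 = Astar r0 ∨ v1 = -Astar r0 := by
    rw [hv1]; split_ifs <;> simp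
  have hv1pos : 0 < v1 i := by
    rw [hv1]
    by_cases h : 0 < Astar r0 i
    · rw [if_pos h]; exact h
    · rw [if_neg h]; simp only [Pi.neg_apply]; omega
  have hrow : (fun j => ((Astar r0 j : ℤ) : ℚ)) ∈ W := by
    apply Submodule.subset_span
    exact ⟨r0, rfl⟩
  have hv1W : (fun j => ((v1 j : ℤ) : ℚ)) ∈ W := by
    rcases hv1cases with h | h <;> rw [h]
    · exact hrow
    · simp only [Pi.neg_apply, Int.cast_neg]
      exact W.neg_mem hrow
  have hv1iQ : ((v1 i : ℤ) : ℚ) ≠ 0 := by exact_mod_cast hv1pos.ne'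
  -- m ≠ 0
  have hm0 : m ≠ 0 := by
    intro h
    rw [h] at hWfin
    have : W = ⊥ := Submodule.finrank_eq_zero.mp hWfin
    rw [this] at hv1W
    simp only [Submodule.mem_bot] at hv1W
    exact hv1iQ (by rw [congrFun hv1W i]; rfl)
  obtain ⟨m0, rfl⟩ := Nat.exists_eq_succ_of_ne_zero hm0
  -- the functional
  set φ : W →ₗ[ℚ] ℚ := (LinearMap.proj i).comp W.subtype with hφdef
  have hφv1 : φ ⟨_, hv1W⟩ = ((v1 i : ℤ) : ℚ) := rfl
  have hφsurj : Function.Surjective φ := by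
    intro c
    refine ⟨(c / ((v1 i : ℤ) : ℚ)) • ⟨_, hv1W⟩, ?_⟩
    rw [map_smul, hφv1, smul_eq_mul, div_mul_cancel₀ _ hv1iQ]
  have hkerfin : finrank ℚ (LinearMap.ker φ) = m0 := by
    have h1 := LinearMap.finrank_range_add_finrank_ker φ
    rw [LinearMap.range_eq_top.mpr hφsurj, finrank_top, finrank_self, hWfin] at h1
    omega
  set W' : Submodule ℚ (Fin n → ℚ) := (LinearMap.ker φ).map W.subtype with hW'def
  have hW'mem : ∀ x : Fin n → ℚ, x ∈ W' ↔ x ∈ W ∧ x i = 0 := by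
    intro x
    constructor
    · rintro ⟨y, hy, rfl⟩
      exact ⟨y.2, LinearMap.mem_ker.mp hy⟩
    · rintro ⟨hxW, hxi⟩
      exact ⟨⟨x, hxW⟩, LinearMap.mem_ker.mpr hxi, rfl⟩
  have hW'fin : finrank ℚ W' = m0 := by
    rw [hW'def, Submodule.finrank_map_subtype_eq, hkerfin]
  haveI : FiniteDimensional ℚ W' := inferInstance
  let bas : Basis (Fin m0) ℚ W' := (Module.finBasis ℚ W').reindex (finCongr hW'fin)
  set ws : Fin m0 → (Fin n → ℚ) := fun s => (bas s : Fin n → ℚ) with hws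
  have hspanws : Submodule.span ℚ (Set.range ws) = W' := by
    have h1 : Set.range ws = W'.subtype '' Set.range bas := by
      rw [← Set.range_comp]; rfl
    rw [h1, ← Submodule.map_span, bas.span_eq, Submodule.map_subtype_top]
  have hwsW' : ∀ s, ws s ∈ W' := fun s => (bas s).2
  have hwsW : ∀ s, ws s ∈ W := fun s => ((hW'mem _).mp (hwsW' s)).1
  have hwsi : ∀ s, ws s i = 0 := fun s => ((hW'mem _).mp (hwsW' s)).2
  choose z N hNpos hzN using fun s => exists_int_scale (ws s)
  have hNQ : ∀ s, ((N s : ℕ) : ℚ) ≠ 0 := fun s => Nat.cast_ne_zero.mpr (hNpos s).ne'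
  set Atil : Matrix (Fin (m0 + 1)) (Fin n) ℤ := Matrix.of (Fin.cons v1 z) with hAtil
  set Vt : Matrix (Fin (m0 + 1)) (Fin n) ℚ := Atil.map (Int.cast : ℤ → ℚ) with hVt
  have hrow0 : Vt 0 = fun j => ((v1 j : ℤ) : ℚ) := rfl
  have hrowsucc : ∀ s, Vt s.succ = ((N s : ℕ) : ℚ) • ws s := by
    intro s
    have : Vt s.succ = fun j => ((z s j : ℤ) : ℚ) := rfl
    rw [this, hzN s]
  have hspanVt : Submodule.span ℚ (Set.range Vt) = W := by
    apply le_antisymm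
    · rw [Submodule.span_le]
      rintro _ ⟨r, rfl⟩
      induction r using Fin.cases with
      | zero => rw [hrow0]; exact hv1W
      | succ s => rw [hrowsucc s]; exact W.smul_mem _ (hwsW s)
    · intro w hw
      set a : ℚ := w i / ((v1 i : ℤ) : ℚ) with ha
      have hv1mem : (fun j => ((v1 j : ℤ) : ℚ)) ∈ Submodule.span ℚ (Set.range Vt) :=
        hrow0 ▸ Submodule.subset_span ⟨0, rfl⟩
      have hw'W' : w - a • (fun j => ((v1 j : ℤ) : ℚ)) ∈ W' := by
        rw [hW'mem]
        constructor
        · exact sub_mem hw (W.smul_mem a hv1W)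
        · show w i - a * ((v1 i : ℤ) : ℚ) = 0
          rw [ha, div_mul_cancel₀ _ hv1iQ, sub_self]
      have hle : Submodule.span ℚ (Set.range ws) ≤ Submodule.span ℚ (Set.range Vt) := by
        rw [Submodule.span_le]
        rintro _ ⟨s, rfl⟩
        have hwseq : ws s = ((N s : ℕ) : ℚ)⁻¹ • Vt s.succ := by
          rw [hrowsucc s, smul_smul, inv_mul_cancel₀ (hNQ s), one_smul]
        rw [hwseq]
        exact Submodule.smul_mem _ _ (Submodule.subset_span ⟨s.succ, rfl⟩)
      have h2 : w - a • (fun j => ((v1 j : ℤ) : ℚ)) ∈ Submodule.span ℚ (Set.range Vt) :=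
        hle (hspanws ▸ hw'W')
      have h3 := add_mem h2 (Submodule.smul_mem _ a hv1mem)
      rwa [sub_add_cancel] at h3
  refine ⟨Atil, ?_, ?_, ?_⟩
  · ext u
    simp only [Set.mem_setOf_eq]
    rw [int_mulVec_zero_iff, mulVec_zero_iff_span, ← hVt, hspanVt, hAker]
  · rw [← hVt, Matrix.rank_eq_finrank_span_row, Matrix.row, hspanVt, hWfin]
  · -- column condition
    refine ⟨(v1 i).toNat, 0, by omega, ?_⟩
    intro r
    induction r using Fin.cases with
    | zero =>
      rw [if_pos rfl]
      show v1 i = _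
      omega
    | succ s =>
      rw [if_neg (Fin.succ_ne_zero s)]
      show z s i = 0
      have := congrFun (hzN s) i
      simp only [Pi.smul_apply, hwsi, smul_eq_mul, mul_zero] at this
      exact_mod_cast this

/-- Given a parametrization matrix `A* ∈ M_{m',n}(ℤ)` of rank `m ≤ m'` over `ℚ` and an index
`i` with nonzero column, there is a maximal-rank matrix `Ã ∈ M_{m,n}(ℤ)` with the same integer
kernel (hence the same toric ideal) whose `i`-th column is `q·e_j` for some `q > 0` and some
`j`, i.e. the new parametrization sends `x_i` to `t_j^q`. -/
theorem stmt_8 (k : Type) [Field k] (m' m n : ℕ) (hm : m ≤ m')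
    (Astar : Matrix (Fin m') (Fin n) ℤ)
    (hrank : (Astar.map (Int.cast : ℤ → ℚ)).rank = m)
    (i : Fin n) (hi : (fun r => Astar r i) ≠ (0 : Fin m' → ℤ)) :
    ∃ Atil : Matrix (Fin m) (Fin n) ℤ,
      {u : Fin n → ℤ | Atil.mulVec u = 0} = {u : Fin n → ℤ | Astar.mulVec u = 0} ∧
      RingHom.ker (phiB k Atil) = RingHom.ker (phiB k Astar) ∧
      (Atil.map (Int.cast : ℤ → ℚ)).rank = m ∧
      ∃ (q : ℕ) (j : Fin m), 0 < q ∧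
        ∀ r : Fin m, Atil r i = if r = j then (q : ℤ) else 0 := by
  obtain ⟨Atil, hset, hrk, hcol⟩ := construction m' m n Astar hrank i hi
  have hker : ∀ u : Fin n → ℤ, Atil.mulVec u = 0 ↔ Astar.mulVec u = 0 := by
    intro u
    constructor
    · intro h; exact Set.ext_iff.mp hset u |>.mp h
    · intro h; exact Set.ext_iff.mp hset u |>.mpr h
  refine ⟨Atil, hset, ?_, hrk, hcol⟩
  apply le_antisymm
  · exact ker_phiB_subset k Atil Astar hker
  · exact ker_phiB_subset k Astar Atil (fun u => (hker u).symm)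
end
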